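/- Let M ∈ M_{m,(m+n)}(ℝ) and let W ≤ ℝ^{m+n} be a nonzero rational subspace (i.e. spanned by vectors in ℚ^{m+n}) with dim(M·W) = r ≥ 1. Then β(M) ≥ (dim W)/r − 1. -/

import Mathlib

open scoped ENNReal

noncomputable def euclNorm {d : ℕ} (v : Fin d → ℝ) : ℝ :=
  ‖(WithLp.equiv 2 (Fin d → ℝ)).symm v‖

section Aux
variable {d : ℕ}

lemma euclNorm_eq (v : Fin d → ℝ) :
    euclNorm v = ‖(WithLp.linearEquiv 2 ℝ (Fin d → ℝ)).symm v‖ := rfl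

lemma euclNorm_nonneg (v : Fin d → ℝ) : 0 ≤ euclNorm v := norm_nonneg _

lemma euclNorm_pos {v : Fin d → ℝ} (h : v ≠ 0) : 0 < euclNorm v := by
  rw [euclNorm_eq]
  rw [norm_pos_iff]
  simpa using h

lemma euclNorm_zero : euclNorm (0 : Fin d → ℝ) = 0 := by
  rw [euclNorm_eq, map_zero, norm_zero]

lemma euclNorm_smul (s : ℝ) (v : Fin d → ℝ) : euclNorm (s • v) = |s| * euclNorm v := by
  rw [euclNorm_eq, map_smul, norm_smul, Real.norm_eq_abs, euclNorm_eq]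

lemma euclNorm_sum_le {ι : Type*} (s : Finset ι) (f : ι → (Fin d → ℝ)) :
    euclNorm (∑ i ∈ s, f i) ≤ ∑ i ∈ s, euclNorm (f i) := by
  rw [euclNorm_eq, map_sum]
  exact (norm_sum_le _ _).trans (le_of_eq (by rfl))

lemma abs_le_euclNorm (v : Fin d → ℝ) (j : Fin d) : |v j| ≤ euclNorm v := by
  rw [euclNorm_eq]
  have h := EuclideanSpace.norm_eq ((WithLp.linearEquiv 2 ℝ (Fin d → ℝ)).symm v)
  rw [h]
  have hco : ∀ i, ((WithLp.linearEquiv 2 ℝ (Fin d → ℝ)).symm v) i = v i := fun i => rfl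
  have : |v j| = Real.sqrt (‖v j‖ ^ 2) := by
    rw [Real.sqrt_sq_eq_abs, Real.norm_eq_abs, abs_abs]
  rw [this]
  apply Real.sqrt_le_sqrt
  simp only [hco]
  exact Finset.single_le_sum (f := fun i => ‖v i‖ ^ 2) (fun i _ => by positivity) (Finset.mem_univ j)

lemma one_le_euclNorm_int {q : Fin d → ℤ} (hq : q ≠ 0) :
    1 ≤ euclNorm (fun i => ((q i : ℝ))) := by
  obtain ⟨j, hj⟩ : ∃ j, q j ≠ 0 := by
    by_contra h; push_neg at h; exact hq (funext h)
  calc (1 : ℝ) ≤ |(q j : ℝ)| := by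
        rw [← Int.cast_abs]; exact_mod_cast Int.one_le_abs hj
    _ ≤ _ := abs_le_euclNorm (fun i => ((q i : ℝ))) j

lemma exists_int_vec (v : Fin d → ℚ) :
    ∃ D : ℕ, ∃ z : Fin d → ℤ, 0 < D ∧
      ∀ j, (z j : ℝ) = (D : ℝ) * ((v j : ℝ)) := by
  refine ⟨∏ i, (v i).den, fun j => (v j).num * (((∏ i, (v i).den) / (v j).den : ℕ) : ℤ), ?_, ?_⟩
  · exact Finset.prod_pos fun i _ => (v i).pos
  · intro j
    have hdvd : (v j).den ∣ ∏ i, (v i).den := Finset.dvd_prod_of_mem _ (Finset.mem_univ j)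
    have hden : ((v j).den : ℝ) ≠ 0 := by
      exact_mod_cast (v j).pos.ne'
    rw [Int.cast_mul, Int.cast_natCast, Nat.cast_div hdvd hden, Rat.cast_def]
    field_simp
end Aux

def IsRationalSubspace {d : ℕ} (W : Submodule ℝ (Fin d → ℝ)) : Prop :=
  ∃ s : Set (Fin d → ℚ), W = Submodule.span ℝ ((fun v : Fin d → ℚ => fun i => ((v i : ℝ))) '' s)

lemma exists_int_ind {d : ℕ} (W : Submodule ℝ (Fin d → ℝ)) (hW : IsRationalSubspace W) :
    ∃ z : Fin (Module.finrank ℝ W) → (Fin d → ℤ),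
      LinearIndependent ℝ (fun i => fun j => ((z i j : ℝ))) ∧
      ∀ i, (fun j => ((z i j : ℝ))) ∈ W := by
  obtain ⟨s, hs⟩ := hW
  set φ : (Fin d → ℚ) → (Fin d → ℝ) := fun v => fun i => ((v i : ℝ)) with hφ
  obtain ⟨t, hts, hspan, hind⟩ := exists_linearIndependent ℝ (φ '' s)
  have htW : Submodule.span ℝ t = W := by rw [hspan, ← hs]
  have htfin : t.Finite := hind.setFinite
  haveI := htfin.fintype
  have hcard : Fintype.card t = Module.finrank ℝ W := by
    rw [← Set.toFinset_card, ← finrank_span_set_eq_card hind, htW]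
  let e : Fin (Module.finrank ℝ W) ≃ t := (Fintype.equivFinOfCardEq hcard).symm
  have hw_ind : LinearIndependent ℝ (fun i => ((e i : Fin d → ℝ))) := hind.comp e e.injective
  have hw_mem : ∀ i, ((e i : Fin d → ℝ)) ∈ W := fun i => htW.le (Submodule.subset_span (e i).2)
  have hrat : ∀ i, ∃ v : Fin d → ℚ, φ v = (e i : Fin d → ℝ) := by
    intro i
    obtain ⟨v, _, hveq⟩ := hts (e i).2
    exact ⟨v, hveq⟩
  choose v hv using hrat
  choose D z hD hz using fun i => exists_int_vec (v i)
  have hzw : ∀ i, (fun j => ((z i j : ℝ))) = ((D i : ℝ)) • ((e i : Fin d → ℝ)) := by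
    intro i
    funext j
    rw [Pi.smul_apply, smul_eq_mul, hz i j, ← hv i]
  refine ⟨z, ?_, ?_⟩
  · have h1 := hw_ind.units_smul (fun i => Units.mk0 ((D i : ℝ))
      (by exact_mod_cast (hD i).ne'))
    have h2 : (fun i => fun j => ((z i j : ℝ))) =
        (fun i => Units.mk0 ((D i : ℝ)) (by exact_mod_cast (hD i).ne')) •
          (fun i => ((e i : Fin d → ℝ))) := by
      funext i
      rw [hzw i]
      rfl
    rw [h2]
    exact h1
  · intro i
    rw [hzw i]
    exact Submodule.smul_mem _ _ (hw_mem i)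

set_option maxHeartbeats 1000000 in
lemma key {m n : ℕ} (M : Matrix (Fin m) (Fin (m + n)) ℝ)
    (W : Submodule ℝ (Fin (m + n) → ℝ)) (hW : IsRationalSubspace W)
    (r : ℕ) (hrank : Module.finrank ℝ (W.map M.mulVecLin) = r)
    (hker : ∀ q : Fin (m+n) → ℤ, q ≠ 0 → (fun j => ((q j : ℝ))) ∈ W →
      M.mulVec (fun j => ((q j : ℝ))) ≠ 0)
    (e : ℝ) (he : 0 < e) (hlt : (1 + e) * r < (Module.finrank ℝ W : ℝ))
    (ε : ℝ) (hε : 0 < ε) :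
    ∃ q : Fin (m+n) → ℤ, q ≠ 0 ∧
      euclNorm (M.mulVec fun j => ((q j : ℝ))) < euclNorm (fun j => ((q j : ℝ))) ^ (-e) ∧
      0 < euclNorm (M.mulVec fun j => ((q j : ℝ))) ∧
      euclNorm (M.mulVec fun j => ((q j : ℝ))) < ε := by
  classical
  obtain ⟨z, hzind, hzmem⟩ := exists_int_ind W hW
  set U := W.map M.mulVecLin with hU
  obtain ⟨u, -⟩ : ∃ u : Module.Basis (Fin r) ℝ U, True :=
    ⟨Module.finBasisOfFinrankEq ℝ U hrank, trivial⟩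
  set zR : Fin (Module.finrank ℝ W) → (Fin (m+n) → ℝ) := fun i => fun j => ((z i j : ℝ)) with hzR
  have hzind' : LinearIndependent ℝ zR := by rw [hzR]; exact hzind
  have hzmem' : ∀ i, zR i ∈ W := by intro i; rw [hzR]; exact hzmem i
  have hLz : ∀ i, M.mulVecLin (zR i) ∈ U := fun i => Submodule.mem_map_of_mem (hzmem' i)
  set c : Fin (Module.finrank ℝ W) → Fin r → ℝ :=
    fun i => ((u.repr ⟨M.mulVecLin (zR i), hLz i⟩ : Fin r →₀ ℝ) : Fin r → ℝ) with hc
  set C : ℝ := 1 + ∑ i, ∑ j, |c i j| with hC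
  set C₁ : ℝ := 1 + 2 * ∑ i, euclNorm (zR i) with hC₁
  set C₂ : ℝ := 1 + ∑ j, euclNorm ((u j : Fin m → ℝ)) with hC₂
  have hsC : (0:ℝ) ≤ ∑ i, ∑ j, |c i j| :=
    Finset.sum_nonneg fun i _ => Finset.sum_nonneg fun j _ => abs_nonneg _
  have hsC₁ : (0:ℝ) ≤ ∑ i, euclNorm (zR i) := Finset.sum_nonneg fun i _ => euclNorm_nonneg _
  have hsC₂ : (0:ℝ) ≤ ∑ j, euclNorm ((u j : Fin m → ℝ)) :=
    Finset.sum_nonneg fun j _ => euclNorm_nonneg _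
  have hC0 : 1 ≤ C := by rw [hC]; linarith
  have hC₁1 : 1 ≤ C₁ := by rw [hC₁]; linarith
  have hC₂1 : 1 ≤ C₂ := by rw [hC₂]; linarith
  set γ : ℝ := (Module.finrank ℝ W : ℝ) - (1+e)*r with hγ
  have hγ0 : 0 < γ := by rw [hγ]; linarith
  have hC₁e : 0 < C₁ ^ e := Real.rpow_pos_of_pos (by linarith) e
  set C₆ : ℝ := 2*C*C₂*C₁^e + 1 with hC₆
  have hC₆1 : 1 ≤ C₆ := by
    have h := mul_pos (mul_pos (by linarith : (0:ℝ) < 2*C) (by linarith : (0:ℝ) < C₂)) hC₁e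
    rw [hC₆]; linarith
  -- choose N
  obtain ⟨N, hN1, hNγ, hNε⟩ : ∃ N : ℕ, 1 ≤ (N:ℝ) ∧ (3*C₆)^r < (N:ℝ)^γ ∧
      (C₁*(N:ℝ))^(-e) < 2*ε := by
    have h1 : Filter.Tendsto (fun N : ℕ => ((N:ℝ))^γ) Filter.atTop Filter.atTop :=
      (tendsto_rpow_atTop hγ0).comp tendsto_natCast_atTop_atTop
    have h2 : Filter.Tendsto (fun N : ℕ => (C₁*(N:ℝ))^(-e)) Filter.atTop (nhds 0) :=
      (tendsto_rpow_neg_atTop he).comp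
        (Filter.Tendsto.const_mul_atTop (by linarith : (0:ℝ) < C₁) tendsto_natCast_atTop_atTop)
    have e1 : ∀ᶠ N : ℕ in Filter.atTop, 1 ≤ (N:ℝ) := by
      filter_upwards [Filter.eventually_ge_atTop 1] with N hN
      exact_mod_cast hN
    have e2 := h1.eventually_gt_atTop ((3*C₆)^r)
    have e3 : ∀ᶠ N : ℕ in Filter.atTop, (C₁*(N:ℝ))^(-e) < 2*ε :=
      h2.eventually_lt_const (by linarith : (0:ℝ) < 2*ε)
    obtain ⟨N, h⟩ := (e1.and (e2.and e3)).exists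
    exact ⟨N, h.1, h.2.1, h.2.2⟩
  have hN0 : (0:ℝ) < N := by linarith
  set δ : ℝ := (C₁*(N:ℝ))^(-e) / (2*C₂) with hδ
  have hC₁N : 0 < C₁*(N:ℝ) := by nlinarith
  have hδ0 : 0 < δ := by
    rw [hδ]; exact div_pos (Real.rpow_pos_of_pos hC₁N _) (by linarith)
  set K : ℤ := ⌈(N:ℝ)*C/δ⌉ with hK
  have hK0 : 0 ≤ K := by
    rw [hK]
    exact Int.ceil_nonneg (div_nonneg (mul_nonneg hN0.le (by linarith)) hδ0.le)
  set A : Finset (Fin (Module.finrank ℝ W) → ℤ) :=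
    Fintype.piFinset (fun _ => Finset.Icc (-(N:ℤ)) (N:ℤ)) with hA
  set Bf : Finset (Fin r → ℤ) := Fintype.piFinset (fun _ => Finset.Icc (-K) K) with hBf
  set f : (Fin (Module.finrank ℝ W) → ℤ) → (Fin r → ℤ) :=
    fun a => fun j => ⌊(∑ i, (a i : ℝ) * c i j) / δ⌋ with hf
  have hcoordbound : ∀ a ∈ A, ∀ j, |∑ i, (a i : ℝ) * c i j| ≤ (N:ℝ) * C := by
    intro a ha j
    have hai : ∀ i, |(a i : ℝ)| ≤ (N:ℝ) := by
      intro i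
      have h := (Fintype.mem_piFinset.mp ha) i
      rw [Finset.mem_Icc] at h
      rw [abs_le]
      constructor
      · exact_mod_cast h.1
      · exact_mod_cast h.2
    calc |∑ i, (a i : ℝ) * c i j| ≤ ∑ i, |(a i : ℝ) * c i j| := Finset.abs_sum_le_sum_abs _ _
      _ ≤ ∑ i, (N:ℝ) * |c i j| := by
          apply Finset.sum_le_sum; intro i _
          rw [abs_mul]; exact mul_le_mul_of_nonneg_right (hai i) (abs_nonneg _)
      _ = (N:ℝ) * ∑ i, |c i j| := by rw [Finset.mul_sum]
      _ ≤ (N:ℝ) * C := by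
          apply mul_le_mul_of_nonneg_left _ hN0.le
          have h1 : ∑ i, |c i j| ≤ ∑ i, ∑ j', |c i j'| :=
            Finset.sum_le_sum (fun i _ => Finset.single_le_sum (f := fun j' => |c i j'|)
              (fun j' _ => abs_nonneg _) (Finset.mem_univ j))
          rw [hC]; linarith
  have hmaps : ∀ a ∈ A, f a ∈ Bf := by
    intro a ha
    rw [hBf, Fintype.mem_piFinset]
    intro j
    rw [Finset.mem_Icc]
    have hb := hcoordbound a ha j
    rw [abs_le] at hb
    have hceil : ((N:ℝ)*C)/δ ≤ (K:ℝ) := by rw [hK]; exact Int.le_ceil _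
    constructor
    · rw [Int.le_floor]
      push_cast
      calc -(K:ℝ) ≤ -(((N:ℝ)*C)/δ) := by linarith
        _ = (-((N:ℝ)*C))/δ := by rw [neg_div]
        _ ≤ (∑ i, (a i : ℝ) * c i j) / δ := (div_le_div_iff_of_pos_right hδ0).mpr (by linarith)
    · have h2 : (∑ i, (a i : ℝ) * c i j) / δ ≤ (K:ℝ) := by
        calc (∑ i, (a i : ℝ) * c i j) / δ ≤ ((N:ℝ)*C)/δ := (div_le_div_iff_of_pos_right hδ0).mpr (by linarith)
          _ ≤ (K:ℝ) := hceil
      calc ⌊(∑ i, (a i : ℝ) * c i j) / δ⌋ ≤ ⌊(K:ℝ)⌋ := Int.floor_le_floor h2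
        _ = K := Int.floor_intCast K
  -- cards
  have hIccN : (Finset.Icc (-(N:ℤ)) (N:ℤ)).card = 2*N+1 := by
    rw [Int.card_Icc]; omega
  have hIccK : (Finset.Icc (-K) K).card = (2*K+1).toNat := by
    rw [Int.card_Icc]; omega
  have hAcard : A.card = (2*N+1)^(Module.finrank ℝ W) := by
    rw [hA, Fintype.card_piFinset]
    simp [hIccN]
  have hBcard : Bf.card = ((2*K+1).toNat)^r := by
    rw [hBf, Fintype.card_piFinset]
    simp [hIccK]
  have hrpow1 : 1 ≤ (N:ℝ)^((1:ℝ)+e) := by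
    calc (1:ℝ) = (N:ℝ)^(0:ℝ) := (Real.rpow_zero _).symm
      _ ≤ (N:ℝ)^((1:ℝ)+e) := Real.rpow_le_rpow_of_exponent_le hN1 (by linarith)
  have hKreal : (K:ℝ) ≤ C₆ * (N:ℝ)^((1:ℝ)+e) := le_of_lt <| by
    have h1 : (K:ℝ) < (N:ℝ)*C/δ + 1 := by rw [hK]; exact Int.ceil_lt_add_one _
    have h2 : (N:ℝ)*C/δ = 2*C*C₂*C₁^e * (N:ℝ)^((1:ℝ)+e) := by
      have hrp : (C₁*(N:ℝ))^(-e) = ((C₁*(N:ℝ))^e)⁻¹ := Real.rpow_neg hC₁N.le e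
      have hmul : (C₁*(N:ℝ))^e = C₁^e * (N:ℝ)^e := Real.mul_rpow (by linarith) hN0.le
      have hNe : (N:ℝ)^((1:ℝ)+e) = (N:ℝ) * (N:ℝ)^e := by
        rw [Real.rpow_add hN0, Real.rpow_one]
      have hNe0 : (0:ℝ) < (N:ℝ)^e := Real.rpow_pos_of_pos hN0 _
      rw [hδ, hrp, hmul, hNe, div_div_eq_mul_div, div_eq_mul_inv, inv_inv]
      ring
    have h4 : (0:ℝ) ≤ 2*C*C₂*C₁^e := by
      have := mul_pos (mul_pos (by linarith : (0:ℝ) < 2*C) (by linarith : (0:ℝ) < C₂)) hC₁e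
      linarith
    calc (K:ℝ) < 2*C*C₂*C₁^e * (N:ℝ)^((1:ℝ)+e) + 1 := by rw [← h2]; exact h1
      _ ≤ C₆ * (N:ℝ)^((1:ℝ)+e) := by rw [hC₆]; nlinarith
  have hC₆pos : (0:ℝ) < C₆ := by linarith
  have hcards : Bf.card < A.card := by
    have hb1 : ((2*K+1).toNat : ℝ) = 2*(K:ℝ)+1 := by
      have h : ((2*K+1).toNat : ℤ) = 2*K+1 := by omega
      exact_mod_cast congrArg (fun x : ℤ => (x:ℝ)) h
    have hchain : ((Bf.card : ℝ)) < (A.card : ℝ) := by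
      rw [hAcard, hBcard]
      push_cast
      rw [hb1]
      calc (2*(K:ℝ)+1)^r ≤ (3*C₆*(N:ℝ)^((1:ℝ)+e))^r := by
            apply pow_le_pow_left₀ (by push_cast; linarith [hK0] : (0:ℝ) ≤ 2*(K:ℝ)+1) _ r
            nlinarith
        _ = (3*C₆)^r * ((N:ℝ)^((1:ℝ)+e))^r := by rw [mul_pow]
        _ = (3*C₆)^r * (N:ℝ)^(((1:ℝ)+e)*r) := by
            rw [← Real.rpow_natCast ((N:ℝ)^((1:ℝ)+e)) r, ← Real.rpow_mul hN0.le]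
        _ < (N:ℝ)^γ * (N:ℝ)^(((1:ℝ)+e)*r) :=
            mul_lt_mul_of_pos_right hNγ (Real.rpow_pos_of_pos hN0 _)
        _ = (N:ℝ)^((Module.finrank ℝ W : ℝ)) := by
            rw [← Real.rpow_add hN0]
            congr 1
            rw [hγ]; ring
        _ = (N:ℝ)^(Module.finrank ℝ W) := Real.rpow_natCast _ _
        _ ≤ (2*(N:ℝ)+1)^(Module.finrank ℝ W) := pow_le_pow_left₀ hN0.le (by linarith) _
    exact_mod_cast hchain
  -- pigeonhole
  obtain ⟨a, ha, a', ha', hane, hfeq⟩ := Finset.exists_ne_map_eq_of_card_lt_of_maps_to hcards hmaps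
  set q : Fin (m+n) → ℤ := fun jd => ∑ i, (a i - a' i) * z i jd with hq
  set qR : Fin (m+n) → ℝ := fun jd => ((q jd : ℝ)) with hqR
  have hqsum : qR = ∑ i, ((a i - a' i : ℤ) : ℝ) • zR i := by
    funext jd
    have h1 : qR jd = ∑ i, ((a i - a' i : ℤ) : ℝ) * ((z i jd : ℝ)) := by
      rw [hqR, hq]
      push_cast
      rfl
    rw [h1, Finset.sum_apply]
    apply Finset.sum_congr rfl
    intro i _
    rw [hzR]
    simp [smul_eq_mul]
  have hq0 : q ≠ 0 := by
    intro h0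
    have hqR0 : ∑ i, ((a i - a' i : ℤ) : ℝ) • zR i = 0 := by
      rw [← hqsum]
      funext jd
      rw [hqR]
      simp [h0]
    have hz0 := (Fintype.linearIndependent_iff.mp hzind') (fun i => ((a i - a' i : ℤ):ℝ)) hqR0
    apply hane
    funext i
    have h2 : ((a i - a' i : ℤ):ℝ) = 0 := hz0 i
    have h3 : (a i - a' i : ℤ) = 0 := by exact_mod_cast h2
    omega
  have hqW : qR ∈ W := by
    rw [hqsum]
    exact Submodule.sum_mem _ (fun i _ => Submodule.smul_mem _ _ (hzmem' i))
  have hcoef : ∀ i, |((a i - a' i : ℤ):ℝ)| ≤ 2*(N:ℝ) := by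
    intro i
    have h1 := (Fintype.mem_piFinset.mp ha) i
    have h2 := (Fintype.mem_piFinset.mp ha') i
    rw [Finset.mem_Icc] at h1 h2
    have h3 : |a i - a' i| ≤ 2*(N:ℤ) := by rw [abs_le]; omega
    calc |((a i - a' i : ℤ):ℝ)| = ((|a i - a' i| : ℤ) : ℝ) := by rw [Int.cast_abs]
      _ ≤ ((2*(N:ℤ) : ℤ):ℝ) := by exact_mod_cast h3
      _ = 2*(N:ℝ) := by push_cast; ring
  have hqRle : euclNorm qR ≤ C₁ * (N:ℝ) := by
    rw [hqsum]
    calc euclNorm (∑ i, ((a i - a' i:ℤ):ℝ) • zR i)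
        ≤ ∑ i, euclNorm (((a i - a' i:ℤ):ℝ) • zR i) := euclNorm_sum_le _ _
      _ = ∑ i, |((a i - a' i:ℤ):ℝ)| * euclNorm (zR i) := by
          apply Finset.sum_congr rfl; intro i _; exact euclNorm_smul _ _
      _ ≤ ∑ i, 2*(N:ℝ) * euclNorm (zR i) :=
          Finset.sum_le_sum (fun i _ => mul_le_mul_of_nonneg_right (hcoef i) (euclNorm_nonneg _))
      _ = 2*(N:ℝ) * ∑ i, euclNorm (zR i) := by rw [Finset.mul_sum]
      _ ≤ C₁ * (N:ℝ) := by rw [hC₁]; nlinarith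
  have hqR1 : 1 ≤ euclNorm qR := by
    rw [hqR]; exact one_le_euclNorm_int hq0
  have hqRpos : 0 < euclNorm qR := by linarith
  set t : Fin r → ℝ := fun j => ∑ i, ((a i - a' i:ℤ):ℝ) * c i j with ht
  have htlt : ∀ j, |t j| < δ := by
    intro j
    have hfe : ⌊(∑ i, (a i : ℝ) * c i j)/δ⌋ = ⌊(∑ i, (a' i : ℝ) * c i j)/δ⌋ := by
      have := congrFun hfeq j
      rw [hf] at this
      exact this
    have habs := Int.abs_sub_lt_one_of_floor_eq_floor hfe
    have hts : t j = ∑ i, ((a i:ℝ)*c i j) - ∑ i, ((a' i:ℝ)*c i j) := by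
      rw [ht, ← Finset.sum_sub_distrib]
      apply Finset.sum_congr rfl
      intro i _
      push_cast
      ring
    have h2 : |t j / δ| < 1 := by
      have h3 : t j / δ = (∑ i, (a i:ℝ)*c i j)/δ - (∑ i, (a' i:ℝ)*c i j)/δ := by
        rw [hts, sub_div]
      rw [h3]; exact habs
    rw [abs_div, abs_of_pos hδ0, div_lt_one hδ0] at h2
    exact h2
  have hLq_mem : M.mulVecLin qR ∈ U := Submodule.mem_map_of_mem hqW
  have hsub : (⟨M.mulVecLin qR, hLq_mem⟩ : U) =
      ∑ i, ((a i - a' i:ℤ):ℝ) • (⟨M.mulVecLin (zR i), hLz i⟩ : U) := by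
    apply Subtype.ext
    rw [Submodule.coe_sum]
    simp only [SetLike.val_smul]
    rw [hqsum, map_sum]
    apply Finset.sum_congr rfl
    intro i _
    rw [map_smul]
  have hreprq : ∀ j, (u.repr ⟨M.mulVecLin qR, hLq_mem⟩ : Fin r →₀ ℝ) j = t j := by
    intro j
    rw [hsub, map_sum, Finsupp.finset_sum_apply]
    rw [ht]
    apply Finset.sum_congr rfl
    intro i _
    rw [map_smul, Finsupp.smul_apply, smul_eq_mul, hc]
  have hMq : M.mulVec qR = ∑ j, t j • ((u j : Fin m → ℝ)) := by
    have h1 : (⟨M.mulVecLin qR, hLq_mem⟩ : U) = ∑ j, t j • u j := by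
      conv_lhs => rw [← u.sum_repr ⟨M.mulVecLin qR, hLq_mem⟩]
      apply Finset.sum_congr rfl
      intro j _
      rw [hreprq j]
    have h2 : M.mulVecLin qR = ((∑ j, t j • u j : U) : Fin m → ℝ) := congrArg Subtype.val h1
    rw [← Matrix.mulVecLin_apply, h2, Submodule.coe_sum]
    apply Finset.sum_congr rfl
    intro j _
    rw [SetLike.val_smul]
  have hMqle : euclNorm (M.mulVec qR) ≤ δ * C₂ := by
    rw [hMq]
    calc euclNorm (∑ j, t j • ((u j : Fin m → ℝ)))
        ≤ ∑ j, euclNorm (t j • ((u j : Fin m → ℝ))) := euclNorm_sum_le _ _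
      _ = ∑ j, |t j| * euclNorm ((u j : Fin m → ℝ)) := by
          apply Finset.sum_congr rfl; intro j _; exact euclNorm_smul _ _
      _ ≤ ∑ j, δ * euclNorm ((u j : Fin m → ℝ)) :=
          Finset.sum_le_sum (fun j _ => mul_le_mul_of_nonneg_right (htlt j).le (euclNorm_nonneg _))
      _ = δ * ∑ j, euclNorm ((u j : Fin m → ℝ)) := by rw [Finset.mul_sum]
      _ ≤ δ * C₂ := mul_le_mul_of_nonneg_left (by rw [hC₂]; linarith) hδ0.le
  have hδC₂ : δ * C₂ = (C₁*(N:ℝ))^(-e)/2 := by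
    have hC₂0 : C₂ ≠ 0 := by linarith
    rw [hδ]
    field_simp
  have hrpos : (0:ℝ) < (C₁*(N:ℝ))^(-e) := Real.rpow_pos_of_pos hC₁N _
  have hMqlt : euclNorm (M.mulVec qR) < euclNorm qR ^ (-e) := by
    have h1 : (C₁*(N:ℝ))^(-e) ≤ euclNorm qR ^ (-e) :=
      Real.rpow_le_rpow_of_nonpos hqRpos hqRle (by linarith)
    calc euclNorm (M.mulVec qR) ≤ δ*C₂ := hMqle
      _ < (C₁*(N:ℝ))^(-e) := by rw [hδC₂]; linarith
      _ ≤ _ := h1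
  have hMqε : euclNorm (M.mulVec qR) < ε := by
    calc euclNorm (M.mulVec qR) ≤ δ*C₂ := hMqle
      _ < ε := by rw [hδC₂]; linarith
  have hMqpos : 0 < euclNorm (M.mulVec qR) := by
    apply euclNorm_pos
    have h := hker q hq0 (by rw [← hqR]; exact hqW)
    rw [hqR]
    exact h
  refine ⟨q, hq0, ?_, ?_, ?_⟩
  · rw [← hqR]; exact hMqlt
  · rw [← hqR]; exact hMqpos
  · rw [← hqR]; exact hMqε

def approxSet (m n : ℕ) (M : Matrix (Fin m) (Fin (m + n)) ℝ) (b : ℝ) :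
    Set (Fin (m + n) → ℤ) :=
  {q | euclNorm (M.mulVec fun i => (q i : ℝ)) < euclNorm (fun i => ((q i : ℝ))) ^ (-b)}

noncomputable def dioExp (m n : ℕ) (M : Matrix (Fin m) (Fin (m + n)) ℝ) : ℝ≥0∞ :=
  sSup {x : ℝ≥0∞ | ∃ b : ℝ, 0 ≤ b ∧ x = ENNReal.ofReal b ∧ (approxSet m n M b).Infinite}

lemma dioExp_ge {m n : ℕ} (M : Matrix (Fin m) (Fin (m + n)) ℝ) {b : ℝ} (hb : 0 ≤ b)
    (h : (approxSet m n M b).Infinite) : ENNReal.ofReal b ≤ dioExp m n M :=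
  le_sSup ⟨b, hb, rfl, h⟩

lemma approxSet_anti {m n : ℕ} (M : Matrix (Fin m) (Fin (m + n)) ℝ) {b e : ℝ}
    (hb : 0 ≤ b) (hbe : b ≤ e) (he : 0 < e) :
    approxSet m n M e ⊆ approxSet m n M b := by
  intro q hq
  rw [approxSet, Set.mem_setOf_eq] at hq
  have hq0 : q ≠ 0 := by
    intro h0
    subst h0
    have h1 : (fun i => (((0 : Fin (m+n) → ℤ) i : ℝ))) = (0 : Fin (m+n) → ℝ) := by
      funext i; simp
    rw [h1, euclNorm_zero, Real.zero_rpow (neg_ne_zero.mpr he.ne')] at hq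
    exact absurd hq (not_lt.mpr (euclNorm_nonneg _))
  have h1 : 1 ≤ euclNorm (fun i => ((q i : ℝ))) := one_le_euclNorm_int hq0
  rw [approxSet, Set.mem_setOf_eq]
  calc euclNorm (M.mulVec fun i => (q i : ℝ)) < euclNorm (fun i => ((q i : ℝ))) ^ (-e) := hq
    _ ≤ euclNorm (fun i => ((q i : ℝ))) ^ (-b) :=
        Real.rpow_le_rpow_of_exponent_le h1 (by linarith)

lemma infinite_of_ker {m n : ℕ} (M : Matrix (Fin m) (Fin (m + n)) ℝ)
    (q₀ : Fin (m+n) → ℤ) (hq0 : q₀ ≠ 0)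
    (hM : M.mulVec (fun j => ((q₀ j : ℝ))) = 0) (b : ℝ) :
    (approxSet m n M b).Infinite := by
  obtain ⟨j₀, hj₀⟩ : ∃ j, q₀ j ≠ 0 := by
    by_contra h; push_neg at h; exact hq0 (funext h)
  have hcast0 : (fun j => ((q₀ j : ℝ))) ≠ 0 := by
    intro h
    apply hj₀
    have h1 : ((q₀ j₀ : ℝ)) = 0 := by simpa using congrFun h j₀
    exact_mod_cast h1
  refine Set.infinite_of_injective_forall_mem
    (f := fun k : ℕ => fun j => ((k:ℤ)+1) * q₀ j) ?_ ?_
  · intro k k' h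
    have h1 := congrFun h j₀
    have h2 : ((k:ℤ)+1) = ((k':ℤ)+1) := mul_right_cancel₀ hj₀ h1
    have h3 : (k:ℤ) = (k':ℤ) := by omega
    exact_mod_cast h3
  · intro k
    rw [approxSet, Set.mem_setOf_eq]
    have hcast : (fun j => (((((k:ℤ)+1) * q₀ j : ℤ)) : ℝ)) =
        ((k:ℝ)+1) • (fun j => ((q₀ j : ℝ))) := by
      funext j
      push_cast
      simp [smul_eq_mul]
    rw [hcast, Matrix.mulVec_smul, hM, smul_zero, euclNorm_zero]
    apply Real.rpow_pos_of_pos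
    apply euclNorm_pos
    apply smul_ne_zero _ hcast0
    positivity

def pencil (m n : ℕ) (W : Submodule ℝ (Fin (m + n) → ℝ)) (r : ℕ) :
    Set (Matrix (Fin m) (Fin (m + n)) ℝ) :=
  {M | Module.finrank ℝ (W.map M.mulVecLin) ≤ r}

theorem stmt1 (m n : ℕ) (M : Matrix (Fin m) (Fin (m + n)) ℝ)
    (W : Submodule ℝ (Fin (m + n) → ℝ)) (hW : IsRationalSubspace W) (hW0 : W ≠ ⊥)
    (r : ℕ) (hr : 1 ≤ r) (hrank : Module.finrank ℝ (W.map M.mulVecLin) = r) :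
    ENNReal.ofReal ((Module.finrank ℝ W : ℝ) / r - 1) ≤ dioExp m n M := by
  set cR : ℝ := (Module.finrank ℝ W : ℝ)/r - 1 with hcR
  clear_value cR
  by_cases hker : ∃ q : Fin (m+n) → ℤ, q ≠ 0 ∧ (fun j => ((q j:ℝ))) ∈ W ∧
      M.mulVec (fun j => ((q j:ℝ))) = 0
  · obtain ⟨q₀, hq0, hqW, hqM⟩ := hker
    have hinf := infinite_of_ker M q₀ hq0 hqM (max 0 cR)
    calc ENNReal.ofReal cR ≤ ENNReal.ofReal (max 0 cR) :=
          ENNReal.ofReal_le_ofReal (le_max_right _ _)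
      _ ≤ dioExp m n M := dioExp_ge M (le_max_left _ _) hinf
  · push_neg at hker
    rcases le_or_gt cR 0 with h0 | h0
    · have hz : ENNReal.ofReal cR = 0 := ENNReal.ofReal_eq_zero.mpr h0
      rw [hz]
      exact zero_le
    · have hr0 : (0:ℝ) < r := by exact_mod_cast hr
      have H : ∀ b : ℝ, 0 ≤ b → b < cR → ENNReal.ofReal b ≤ dioExp m n M := by
        intro b hb hbc
        set e := (b + cR)/2 with hE
        clear_value e
        have he0 : 0 < e := by rw [hE]; linarith
        have hbe : b ≤ e := by rw [hE]; linarith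
        have hecr : e < cR := by rw [hE]; linarith
        have hlt : (1 + e) * r < (Module.finrank ℝ W : ℝ) := by
          have h1 : (1 + e) < (Module.finrank ℝ W : ℝ)/r := by rw [hcR] at hecr; linarith
          calc (1+e)*r < ((Module.finrank ℝ W : ℝ)/r)*r := mul_lt_mul_of_pos_right h1 hr0
            _ = (Module.finrank ℝ W : ℝ) := by field_simp
        have hinf : (approxSet m n M b).Infinite := by
          by_contra hfin
          rw [Set.not_infinite] at hfin
          classical
          set T : Finset ℝ := (hfin.toFinset.image
            (fun q => euclNorm (M.mulVec fun j => ((q j : ℝ))))).filter (fun x => 0 < x) with hT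
          obtain ⟨ε, hεpos, hεle⟩ : ∃ ε : ℝ, 0 < ε ∧ ∀ x ∈ T, ε ≤ x := by
            by_cases hne : T.Nonempty
            · exact ⟨T.min' hne, (Finset.mem_filter.mp (T.min'_mem hne)).2,
                fun x hx => T.min'_le x hx⟩
            · exact ⟨1, one_pos, fun x hx => absurd ⟨x, hx⟩ hne⟩
          obtain ⟨q, hq0, hqlt, hqMpos, hqMε⟩ := key M W hW r hrank hker e he0 hlt ε hεpos
          have hqmem : q ∈ approxSet m n M b := by
            apply approxSet_anti M hb hbe he0
            exact hqlt
          have hval : euclNorm (M.mulVec fun j => ((q j:ℝ))) ∈ T :=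
            Finset.mem_filter.mpr
              ⟨Finset.mem_image_of_mem _ (hfin.mem_toFinset.mpr hqmem), hqMpos⟩
          have hmin : ε ≤ euclNorm (M.mulVec fun j => ((q j:ℝ))) := hεle _ hval
          linarith
        exact dioExp_ge M hb hinf
      have h1 : Filter.Tendsto (fun k : ℕ => cR - 1/((k:ℝ)+1)) Filter.atTop (nhds cR) := by
        have h2 := Filter.Tendsto.sub (tendsto_const_nhds (x := cR) (f := Filter.atTop))
          tendsto_one_div_add_atTop_nhds_zero_nat
        simpa using h2
      have htend : Filter.Tendsto (fun k : ℕ => ENNReal.ofReal (cR - 1/((k:ℝ)+1)))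
          Filter.atTop (nhds (ENNReal.ofReal cR)) :=
        (ENNReal.continuous_ofReal.tendsto cR).comp h1
      apply le_of_tendsto htend
      apply Filter.Eventually.of_forall
      intro k
      rcases le_or_gt (cR - 1/((k:ℝ)+1)) 0 with hk | hk
      · have hz : ENNReal.ofReal (cR - 1/((k:ℝ)+1)) = 0 := ENNReal.ofReal_eq_zero.mpr hk
        rw [hz]
        exact zero_le
      · apply H _ hk.le
        have hp : 0 < 1/((k:ℝ)+1) := by positivity
        linarith
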